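/- Define u₁, u₂ : (0,1) → ℝ by u₁(t) = (1/2)(2 − 3√t + t^{3/2}) + (3/2)(1 − √t)(1 − t) and u₂(t) = (1/(8t))(2 − 3√t + t^{3/2}) + (3/(8√t))(1 − t), and let F : (0,1) → ℝ be given by F(t) = u₁(t) for t ≤ 1/4 and F(t) = u₂(t) for t > 1/4. Then u₁'(1/4) = −3 and u₂'(1/4) = −17/4, F is continuous at 1/4 (u₁(1/4) = u₂(1/4)), and F is not convex on (0,1). -/

import Mathlib

open Real Set

/-- `u₁(t) = (1/2)(2 - 3√t + t^{3/2}) + (3/2)(1 - √t)(1 - t)`. -/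
noncomputable def u₁ (t : ℝ) : ℝ :=
  (1/2) * (2 - 3 * Real.sqrt t + Real.sqrt t ^ 3) +
    (3/2) * (1 - Real.sqrt t) * (1 - t)

/-- `u₂(t) = (1/(8t))(2 - 3√t + t^{3/2}) + (3/(8√t))(1 - t)`. -/
noncomputable def u₂ (t : ℝ) : ℝ :=
  (1 / (8 * t)) * (2 - 3 * Real.sqrt t + Real.sqrt t ^ 3) +
    (3 / (8 * Real.sqrt t)) * (1 - t)

/-- `F = u₁` on `(0, 1/4]` and `F = u₂` on `(1/4, 1)`. -/
noncomputable def Fglue (t : ℝ) : ℝ := if t ≤ 1/4 then u₁ t else u₂ t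

lemma sqrt_quarter : Real.sqrt (1/4) = 1/2 := by
  rw [show (1/4:ℝ) = (1/2)^2 by norm_num, Real.sqrt_sq (by norm_num)]

lemma sqrt81 : Real.sqrt (81/400) = 9/20 := by
  rw [show (81/400:ℝ) = (9/20)^2 by norm_num, Real.sqrt_sq (by norm_num)]

lemma sqrt121 : Real.sqrt (121/400) = 11/20 := by
  rw [show (121/400:ℝ) = (11/20)^2 by norm_num, Real.sqrt_sq (by norm_num)]

lemma hsqrt : HasDerivAt Real.sqrt 1 (1/4) := by
  have h := Real.hasDerivAt_sqrt (show (1/4:ℝ) ≠ 0 by norm_num)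
  rw [sqrt_quarter] at h
  norm_num at h
  exact h

lemma hu₁ : HasDerivAt u₁ (-3) (1/4) := by
  have h := hsqrt
  have H := ((((hasDerivAt_const ((1:ℝ)/4) (2:ℝ)).sub (h.const_mul 3)).add
      (h.pow 3)).const_mul (1/2)).add
    ((((hasDerivAt_const ((1:ℝ)/4) (1:ℝ)).sub h).const_mul (3/2)).mul
      ((hasDerivAt_const ((1:ℝ)/4) (1:ℝ)).sub (hasDerivAt_id (1/4))))
  convert H using 1
  · rfl
  · rfl
  · rfl
  · simp only [sqrt_quarter, id_eq, Pi.sub_apply, Pi.add_apply, Pi.mul_apply]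
    norm_num

lemma hu₂ : HasDerivAt u₂ (-17/4) (1/4) := by
  have h := hsqrt
  have h1 : HasDerivAt (fun t : ℝ => 1 / (8 * t))
      ((0 * (8 * (1/4)) - 1 * (8 * 1)) / (8 * (1/4 : ℝ)) ^ 2) (1/4) :=
    (hasDerivAt_const ((1:ℝ)/4) (1:ℝ)).div ((hasDerivAt_id (1/4)).const_mul 8)
      (by norm_num)
  have h2 : HasDerivAt (fun t : ℝ => 3 / (8 * Real.sqrt t))
      ((0 * (8 * Real.sqrt (1/4)) - 3 * (8 * 1)) / (8 * Real.sqrt (1/4)) ^ 2) (1/4) :=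
    (hasDerivAt_const ((1:ℝ)/4) (3:ℝ)).div (h.const_mul 8)
      (by norm_num [sqrt_quarter])
  have H := (h1.mul (((hasDerivAt_const ((1:ℝ)/4) (2:ℝ)).sub (h.const_mul 3)).add
      (h.pow 3))).add
    (h2.mul ((hasDerivAt_const ((1:ℝ)/4) (1:ℝ)).sub (hasDerivAt_id (1/4))))
  convert H using 1
  · rfl
  · rfl
  · rfl
  · simp only [sqrt_quarter, id_eq, Pi.sub_apply, Pi.add_apply, Pi.mul_apply]
    norm_num

/-- `u₁'(1/4) = -3`, `u₂'(1/4) = -17/4`, `F` is continuous at `1/4`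
(with `u₁(1/4) = u₂(1/4)`), and `F` is not convex on `(0,1)`. -/
theorem Fglue_not_convex :
    deriv u₁ (1/4) = -3 ∧
    deriv u₂ (1/4) = -17/4 ∧
    u₁ (1/4) = u₂ (1/4) ∧
    ContinuousAt Fglue (1/4) ∧
    ¬ ConvexOn ℝ (Set.Ioo 0 1) Fglue := by
  have heq : u₁ (1/4) = u₂ (1/4) := by
    unfold u₁ u₂; rw [sqrt_quarter]; norm_num
  refine ⟨hu₁.deriv, hu₂.deriv, heq, ?_, ?_⟩
  · -- continuity
    have hc1 : ContinuousAt u₁ (1/4) := hu₁.continuousAt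
    have hc2 : ContinuousAt u₂ (1/4) := hu₂.continuousAt
    have hIic : ContinuousWithinAt Fglue (Iic (1/4)) (1/4) :=
      hc1.continuousWithinAt.congr (fun y hy => if_pos hy) (if_pos le_rfl)
    have hIci : ContinuousWithinAt Fglue (Ici (1/4)) (1/4) := by
      refine hc2.continuousWithinAt.congr (fun y hy => ?_) ?_
      · rcases eq_or_lt_of_le (Set.mem_Ici.mp hy : (1:ℝ)/4 ≤ y) with h | h
        · rw [Fglue, ← h, if_pos le_rfl, heq]
        · exact if_neg (not_le.mpr h)
      · rw [Fglue, if_pos le_rfl, heq]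
    have := hIic.union hIci
    rwa [Iic_union_Ici, continuousWithinAt_univ] at this
  · -- not convex
    intro hconv
    have key := hconv.2 (show (81/400:ℝ) ∈ Ioo (0:ℝ) 1 by constructor <;> norm_num)
      (show (121/400:ℝ) ∈ Ioo (0:ℝ) 1 by constructor <;> norm_num)
      (show (0:ℝ) ≤ 21/40 by norm_num) (show (0:ℝ) ≤ 19/40 by norm_num)
      (show (21/40:ℝ) + 19/40 = 1 by norm_num)
    have hx : (21/40 : ℝ) • (81/400 : ℝ) + (19/40 : ℝ) • (121/400 : ℝ) = 1/4 := by
      norm_num [smul_eq_mul]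
    rw [hx] at key
    have e0 : Fglue (1/4) = 7/8 := by
      rw [Fglue, if_pos le_rfl]; unfold u₁; rw [sqrt_quarter]; norm_num
    have e1 : Fglue (81/400) = 2057/2000 := by
      rw [Fglue, if_pos (by norm_num)]; unfold u₁; rw [sqrt81]; norm_num
    have e2 : Fglue (121/400) = 6669/9680 := by
      rw [Fglue, if_neg (by norm_num)]; unfold u₂; rw [sqrt121]; norm_num
    rw [e0, e1, e2, smul_eq_mul, smul_eq_mul] at key
    norm_num at key
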